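/- Let f : ℝ → [0,∞) be continuous and bounded, k > 0, and l > L > 0. Then for every t ∈ [−L, L], ∫_{-∞}^t e^{-k(t−τ)} f(τ) dτ ≤ (e^{kL} e^{-kl} / k) · sup_{s∈ℝ} f(s) + ((1 − e^{-kL} e^{-kl}) / k) · max_{|s| ≤ l} f(s). -/

import Mathlib

open Set MeasureTheory Real

lemma aux_int (k c : ℝ) (hk : 0 < k) :
    IntegrableOn (fun τ => Real.exp (k * τ)) (Set.Iic c) := by
  have h := integrableOn_exp_Iic (k * c)
  rw [← integrable_indicator_iff measurableSet_Iic] at h ⊢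
  have h2 := (integrable_comp_mul_left_iff ((Iic (k * c)).indicator Real.exp) hk.ne').mpr h
  have heq : (Iic c).indicator (fun τ => Real.exp (k * τ))
      = fun x => (Iic (k * c)).indicator Real.exp (k * x) := by
    ext x
    by_cases hx : x ≤ c
    · simp [indicator, hx, (mul_le_mul_iff_right₀ hk).mpr hx]
    · have : ¬ k * x ≤ k * c := fun h' => hx (le_of_mul_le_mul_left h' hk)
      simp [indicator, hx, this]
  rw [heq]; exact h2

lemma aux_val (k c : ℝ) (hk : 0 < k) :
    ∫ τ in Set.Iic c, Real.exp (k * τ) = Real.exp (k * c) / k := by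
  have hderiv : ∀ x ∈ Set.Iic c, HasDerivAt (fun x => Real.exp (k * x) / k) (Real.exp (k * x)) x := by
    intro x _
    have := (((hasDerivAt_id x).const_mul k).exp).div_const k
    simpa [mul_comm, mul_div_assoc, mul_div_cancel_right₀, hk.ne'] using this
  have htend : Filter.Tendsto (fun x => Real.exp (k * x) / k) Filter.atBot (nhds 0) := by
    have h1 : Filter.Tendsto (fun x : ℝ => k * x) Filter.atBot Filter.atBot :=
      Filter.tendsto_id.const_mul_atBot hk
    have := (Real.tendsto_exp_atBot.comp h1).div_const k
    simpa using this
  have := integral_Iic_of_hasDerivAt_of_tendsto' hderiv (aux_int k c hk) htend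
  simpa using this

lemma aux_val2 (k a b : ℝ) (hk : 0 < k) (hab : a ≤ b) :
    ∫ τ in Set.Ioc a b, Real.exp (k * τ) = (Real.exp (k * b) - Real.exp (k * a)) / k := by
  have hsplit : (∫ τ in Set.Iic b, Real.exp (k * τ))
      = (∫ τ in Set.Iic a, Real.exp (k * τ)) + ∫ τ in Set.Ioc a b, Real.exp (k * τ) := by
    rw [← setIntegral_union (Iic_disjoint_Ioc le_rfl) measurableSet_Ioc
      ((aux_int k b hk).mono_set (Iic_subset_Iic.mpr hab))
      ((aux_int k b hk).mono_set Ioc_subset_Iic_self), Iic_union_Ioc_eq_Iic hab]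
  rw [aux_val k a hk, aux_val k b hk] at hsplit
  rw [sub_div]
  linarith

theorem stmt7 (f : ℝ → ℝ) (hf : Continuous f) (hfb : BddAbove (Set.range f))
    (hf0 : ∀ t, 0 ≤ f t) (k L l : ℝ) (hk : 0 < k) (hL : 0 < L) (hLl : L < l) :
    ∀ t ∈ Set.Icc (-L) L,
      (∫ τ in Set.Iic t, Real.exp (-(k * (t - τ))) * f τ) ≤
        Real.exp (k * L) * Real.exp (-(k * l)) / k * sSup (Set.range f) +
        (1 - Real.exp (-(k * L)) * Real.exp (-(k * l))) / k * sSup (f '' Set.Icc (-l) l) := by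
  intro t ht
  obtain ⟨ht1, ht2⟩ := ht
  set M := sSup (Set.range f) with hMdef
  set M' := sSup (f '' Set.Icc (-l) l) with hM'def
  have hl0 : 0 < l := hL.trans hLl
  have hmemb : BddAbove (f '' Set.Icc (-l) l) := hfb.mono (image_subset_range f _)
  have hM : ∀ x, f x ≤ M := fun x => le_csSup hfb ⟨x, rfl⟩
  have hM' : ∀ x ∈ Set.Icc (-l) l, f x ≤ M' := fun x hx => le_csSup hmemb ⟨x, hx, rfl⟩
  have hM0 : 0 ≤ M := (hf0 0).trans (hM 0)
  have hM'0 : 0 ≤ M' := (hf0 l).trans (hM' l ⟨by linarith, le_refl _⟩)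
  have hlt : -l < t := by linarith
  -- integrability of the main integrand on any Iic s
  have hint : ∀ s : ℝ, IntegrableOn (fun τ => Real.exp (-(k * (t - τ))) * f τ) (Set.Iic s) := by
    intro s
    have h1 : IntegrableOn (fun τ => Real.exp (k * τ)) (Set.Iic s) := aux_int k s hk
    have h2 : IntegrableOn (fun τ => f τ * Real.exp (k * τ)) (Set.Iic s) :=
      h1.bdd_mul (c := M) hf.aestronglyMeasurable.restrict
        (Filter.Eventually.of_forall fun x => by rw [Real.norm_eq_abs, abs_of_nonneg (hf0 x)]; exact hM x)
    have h3 := h2.const_mul (Real.exp (-(k * t)))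
    refine IntegrableOn.congr_fun h3 (fun x _ => ?_) measurableSet_Iic
    rw [show -(k * (t - x)) = -(k * t) + k * x by ring, Real.exp_add]
    ring
  -- integrability of exp factor alone
  have hexp : ∀ s : ℝ, IntegrableOn (fun τ => Real.exp (-(k * (t - τ)))) (Set.Iic s) := by
    intro s
    have h3 := (aux_int k s hk).const_mul (Real.exp (-(k * t)))
    refine IntegrableOn.congr_fun h3 (fun x _ => ?_) measurableSet_Iic
    rw [show -(k * (t - x)) = -(k * t) + k * x by ring, Real.exp_add]
  -- value of exp integral on Iic c
  have hexpval : ∀ c : ℝ, (∫ τ in Set.Iic c, Real.exp (-(k * (t - τ))))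
      = Real.exp (-(k * (t - c))) / k := by
    intro c
    have : (∫ τ in Set.Iic c, Real.exp (-(k * (t - τ))))
        = ∫ τ in Set.Iic c, Real.exp (-(k * t)) * Real.exp (k * τ) := by
      refine setIntegral_congr_fun measurableSet_Iic (fun x _ => ?_)
      rw [show -(k * (t - x)) = -(k * t) + k * x by ring, Real.exp_add]
    rw [this, integral_const_mul, aux_val k c hk,
      show -(k * (t - c)) = -(k * t) + k * c by ring, Real.exp_add]
    ring
  have hexpval2 : (∫ τ in Set.Ioc (-l) t, Real.exp (-(k * (t - τ))))
      = (1 - Real.exp (-(k * (t + l)))) / k := by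
    have : (∫ τ in Set.Ioc (-l) t, Real.exp (-(k * (t - τ))))
        = ∫ τ in Set.Ioc (-l) t, Real.exp (-(k * t)) * Real.exp (k * τ) := by
      refine setIntegral_congr_fun measurableSet_Ioc (fun x _ => ?_)
      rw [show -(k * (t - x)) = -(k * t) + k * x by ring, Real.exp_add]
    rw [this, integral_const_mul, aux_val2 k (-l) t hk hlt.le]
    rw [show (1 : ℝ) = Real.exp (-(k * t)) * Real.exp (k * t) by
        rw [← Real.exp_add]; simp,
      show Real.exp (-(k * (t + l))) = Real.exp (-(k * t)) * Real.exp (k * (-l)) by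
        rw [← Real.exp_add]; ring_nf]
    ring
  -- split
  have hsplit : (∫ τ in Set.Iic t, Real.exp (-(k * (t - τ))) * f τ)
      = (∫ τ in Set.Iic (-l), Real.exp (-(k * (t - τ))) * f τ)
        + ∫ τ in Set.Ioc (-l) t, Real.exp (-(k * (t - τ))) * f τ := by
    rw [← setIntegral_union (Iic_disjoint_Ioc le_rfl) measurableSet_Ioc
      ((hint t).mono_set (Iic_subset_Iic.mpr hlt.le))
      ((hint t).mono_set Ioc_subset_Iic_self), Iic_union_Ioc_eq_Iic hlt.le]
  -- bound on Iic (-l)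
  have hA : (∫ τ in Set.Iic (-l), Real.exp (-(k * (t - τ))) * f τ)
      ≤ Real.exp (k * L) * Real.exp (-(k * l)) / k * M := by
    have step1 : (∫ τ in Set.Iic (-l), Real.exp (-(k * (t - τ))) * f τ)
        ≤ ∫ τ in Set.Iic (-l), Real.exp (-(k * (t - τ))) * M := by
      refine setIntegral_mono_on ((hint t).mono_set (Iic_subset_Iic.mpr hlt.le))
        ((hexp (-l)).mul_const M) measurableSet_Iic (fun x _ => ?_)
      exact mul_le_mul_of_nonneg_left (hM x) (Real.exp_nonneg _)
    have step2 : (∫ τ in Set.Iic (-l), Real.exp (-(k * (t - τ))) * M)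
        = Real.exp (-(k * (t + l))) / k * M := by
      rw [integral_mul_const, hexpval (-l)]
      ring_nf
    have step3 : Real.exp (-(k * (t + l))) / k * M
        ≤ Real.exp (k * L) * Real.exp (-(k * l)) / k * M := by
      have h1 : Real.exp (-(k * (t + l))) ≤ Real.exp (k * L) * Real.exp (-(k * l)) := by
        rw [← Real.exp_add]
        apply Real.exp_le_exp.mpr
        nlinarith
      gcongr
    linarith
  -- bound on Ioc (-l) t
  have hB : (∫ τ in Set.Ioc (-l) t, Real.exp (-(k * (t - τ))) * f τ)
      ≤ (1 - Real.exp (-(k * L)) * Real.exp (-(k * l))) / k * M' := by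
    have step1 : (∫ τ in Set.Ioc (-l) t, Real.exp (-(k * (t - τ))) * f τ)
        ≤ ∫ τ in Set.Ioc (-l) t, Real.exp (-(k * (t - τ))) * M' := by
      refine setIntegral_mono_on ((hint t).mono_set Ioc_subset_Iic_self)
        (((hexp t).mono_set Ioc_subset_Iic_self).mul_const M') measurableSet_Ioc
        (fun x hx => ?_)
      refine mul_le_mul_of_nonneg_left (hM' x ⟨hx.1.le, ?_⟩) (Real.exp_nonneg _)
      linarith [hx.2]
    have step2 : (∫ τ in Set.Ioc (-l) t, Real.exp (-(k * (t - τ))) * M')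
        = (1 - Real.exp (-(k * (t + l)))) / k * M' := by
      rw [integral_mul_const, hexpval2]
    have step3 : (1 - Real.exp (-(k * (t + l)))) / k * M'
        ≤ (1 - Real.exp (-(k * L)) * Real.exp (-(k * l))) / k * M' := by
      have h1 : Real.exp (-(k * L)) * Real.exp (-(k * l)) ≤ Real.exp (-(k * (t + l))) := by
        rw [← Real.exp_add]
        apply Real.exp_le_exp.mpr
        nlinarith
      have h2 : (1 - Real.exp (-(k * (t + l)))) / k
          ≤ (1 - Real.exp (-(k * L)) * Real.exp (-(k * l))) / k := by
        gcongr
      exact mul_le_mul_of_nonneg_right h2 hM'0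
    linarith
  linarith
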